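/- arXiv:0906.3258 — 2 statements merged into one kernel-verified Lean document; each statement's English description precedes it below -/
import Mathlib

section
/- Let X and P be types and F₁, F₂ : X × X × X × P × P → X, written F_i(x,y,z;α,β). Define the family of maps R_{(α,β)} : (X×X) × (X×X) → (X×X) × (X×X) by R_{(α,β)}((x₁,x₂),(y₁,y₂)) = ( (F₁(y₁,x₁,y₂;α,β), y₂), (x₁, F₂(x₂,x₁,y₂;α,β)) ). Then R satisfies the parametric Yang–Baxter equation R^{(2,3)}_{(β,γ)} ∘ R^{(1,3)}_{(α,γ)} ∘ R^{(1,2)}_{(α,β)} = R^{(1,2)}_{(α,β)} ∘ R^{(1,3)}_{(α,γ)} ∘ R^{(2,3)}_{(β,γ)} on (X×X)³ for all α, β, γ ∈ P if and only if F₁ and F₂ satisfy, for all x₁, x₂, y₁, y₂, z₁, z₂ ∈ X and all α, β, γ ∈ P, the four functional equations: (i) F₁(F₁(z₁,y₁,z₂;β,γ), F₁(y₁,x₁,F₂(y₂,y₁,z₂;β,γ);α,γ), z₂; α,β) = F₁(z₁, F₁(y₁,x₁,y₂;α,β), z₂; α,γ); (ii) F₂(F₂(y₂,y₁,z₂;β,γ),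 F₁(y₁,x₁,F₂(y₂,y₁,z₂;β,γ);α,γ), z₂; α,β) = F₂(y₂, F₁(y₁,x₁,y₂;α,β), z₂; α,γ); (iii) F₁(y₁,x₁,F₂(y₂,y₁,z₂;β,γ);α,γ) = F₁(F₁(y₁,x₁,y₂;α,β), x₁, F₂(y₂,F₁(y₁,x₁,y₂;α,β),z₂;α,γ); β,γ); (iv) F₂(x₂,x₁,F₂(y₂,y₁,z₂;β,γ);α,γ) = F₂(F₂(x₂,x₁,y₂;α,β), x₁, F₂(y₂,F₁(y₁,x₁,y₂;α,β),z₂;α,γ); β,γ). -/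
/-- `R` acting on factors (1,2) of `Y³` and as the identity on the third. -/
def act12 {Y : Type*} (R : Y × Y → Y × Y) : Y × Y × Y → Y × Y × Y :=
  fun p => ((R (p.1, p.2.1)).1, (R (p.1, p.2.1)).2, p.2.2)

/-- `R` acting on factors (1,3) of `Y³` and as the identity on the second. -/
def act13 {Y : Type*} (R : Y × Y → Y × Y) : Y × Y × Y → Y × Y × Y :=
  fun p => ((R (p.1, p.2.2)).1, p.2.1, (R (p.1, p.2.2)).2)

/-- `R` acting on factors (2,3) of `Y³` and as the identity on the first. -/
def act23 {Y : Type*} (R : Y × Y → Y × Y) : Y × Y × Y → Y × Y × Y :=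
  fun p => (p.1, (R (p.2.1, p.2.2)).1, (R (p.2.1, p.2.2)).2)

/-- The lift of a two-field quad-graph system to a map on `(X×X) × (X×X)`:
`R_{(α,β)}((x₁,x₂),(y₁,y₂)) = ((F₁(y₁,x₁,y₂;α,β), y₂), (x₁, F₂(x₂,x₁,y₂;α,β)))`. -/
def liftMap {X P : Type*} (F₁ F₂ : X → X → X → P → P → X) (α β : P) :
    (X × X) × (X × X) → (X × X) × (X × X) :=
  fun uv => ((F₁ uv.2.1 uv.1.1 uv.2.2 α β, uv.2.2), (uv.1.1, F₂ uv.1.2 uv.1.1 uv.2.2 α β))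

/-- The lifted map satisfies the parametric Yang–Baxter equation iff `F₁`, `F₂`
satisfy the four functional equations. -/
theorem liftMap_yangBaxter_iff {X P : Type*} (F₁ F₂ : X → X → X → P → P → X) :
    (∀ α β γ : P,
      act23 (liftMap F₁ F₂ β γ) ∘ act13 (liftMap F₁ F₂ α γ) ∘ act12 (liftMap F₁ F₂ α β) =
        act12 (liftMap F₁ F₂ α β) ∘ act13 (liftMap F₁ F₂ α γ) ∘ act23 (liftMap F₁ F₂ β γ)) ↔
    (∀ (x₁ x₂ y₁ y₂ z₁ z₂ : X) (α β γ : P),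
      F₁ (F₁ z₁ y₁ z₂ β γ) (F₁ y₁ x₁ (F₂ y₂ y₁ z₂ β γ) α γ) z₂ α β =
        F₁ z₁ (F₁ y₁ x₁ y₂ α β) z₂ α γ ∧
      F₂ (F₂ y₂ y₁ z₂ β γ) (F₁ y₁ x₁ (F₂ y₂ y₁ z₂ β γ) α γ) z₂ α β =
        F₂ y₂ (F₁ y₁ x₁ y₂ α β) z₂ α γ ∧
      F₁ y₁ x₁ (F₂ y₂ y₁ z₂ β γ) α γ =
        F₁ (F₁ y₁ x₁ y₂ α β) x₁ (F₂ y₂ (F₁ y₁ x₁ y₂ α β) z₂ α γ) β γ ∧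
      F₂ x₂ x₁ (F₂ y₂ y₁ z₂ β γ) α γ =
        F₂ (F₂ x₂ x₁ y₂ α β) x₁ (F₂ y₂ (F₁ y₁ x₁ y₂ α β) z₂ α γ) β γ) := by
  constructor
  · intro h x₁ x₂ y₁ y₂ z₁ z₂ α β γ
    have := congrFun (h α β γ) ((x₁, x₂), (y₁, y₂), (z₁, z₂))
    simp only [act12, act13, act23, liftMap, Function.comp_apply, Prod.mk.injEq] at this
    tauto
  · intro h α β γ
    funext p
    obtain ⟨⟨x₁, x₂⟩, ⟨y₁, y₂⟩, ⟨z₁, z₂⟩⟩ := p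
    obtain ⟨h1, h2, h3, h4⟩ := h x₁ x₂ y₁ y₂ z₁ z₂ α β γ
    simp only [act12, act13, act23, liftMap, Function.comp_apply, Prod.mk.injEq]
    exact ⟨⟨h1.symm, trivial⟩, ⟨h3.symm, h2.symm⟩, trivial, h4.symm⟩
end

section
/- The lifted discrete potential KdV Yang–Baxter map, the family R_{(a,b)}((x₁,x₂),(y₁,y₂)) = ( (y₁ + (a−b)/(x₁−y₂), y₂), (x₁, x₂ + (a−b)/(x₁−y₂)) ) on ℂ² × ℂ², satisfies the parametric Yang–Baxter equation: for all parameters a₁, a₂, a₃ ∈ ℂ and all triples of points in ℂ² such that every denominator encountered in evaluating both compositions R^{(2,3)}_{(a₂,a₃)} ∘ R^{(1,3)}_{(a₁,a₃)} ∘ R^{(1,2)}_{(a₁,a₂)} and R^{(1,2)}_{(a₁,a₂)} ∘ R^{(1,3)}_{(a₁,a₃)} ∘ R^{(2,3)}_{(a₂,a₃)} is nonzero, the two compositions give the same value. -/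
/-- The lifted discrete potential KdV Yang–Baxter map
`R_{(a,b)}((x₁,x₂),(y₁,y₂)) = ((y₁+(a−b)/(x₁−y₂), y₂), (x₁, x₂+(a−b)/(x₁−y₂)))`. -/
noncomputable def liftKdV (a b : ℂ) : (ℂ × ℂ) × (ℂ × ℂ) → (ℂ × ℂ) × (ℂ × ℂ) :=
  fun uv => ((uv.2.1 + (a - b) / (uv.1.1 - uv.2.2), uv.2.2),
             (uv.1.1, uv.1.2 + (a - b) / (uv.1.1 - uv.2.2)))


set_option maxHeartbeats 1000000 in
private lemma kdv_key2 (a₁ a₂ a₃ x1 y1 y2 z2 : ℂ)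
    (h1 : x1 - y2 ≠ 0) (h4 : y1 - z2 ≠ 0)
    (h2 : y1 + (a₁-a₂)/(x1-y2) - z2 ≠ 0)
    (h5 : x1 - (y2 + (a₂-a₃)/(y1-z2)) ≠ 0)
    (h6 : y1 + (a₁-a₃)/(x1-(y2+(a₂-a₃)/(y1-z2))) - z2 ≠ 0) :
    (a₁-a₃)/(y1+(a₁-a₂)/(x1-y2)-z2)
      = (a₂-a₃)/(y1-z2) + (a₁-a₂)/(y1+(a₁-a₃)/(x1-(y2+(a₂-a₃)/(y1-z2)))-z2) := by
  have e2 : y1 + (a₁-a₂)/(x1-y2) - z2 = ((y1-z2)*(x1-y2) + (a₁-a₂))/(x1-y2) := by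
    field_simp; ring
  have h2' : (y1-z2)*(x1-y2) + (a₁-a₂) ≠ 0 := fun h => h2 (by rw [e2, h, zero_div])
  have e5 : x1 - (y2 + (a₂-a₃)/(y1-z2)) = ((x1-y2)*(y1-z2) - (a₂-a₃))/(y1-z2) := by
    field_simp; ring
  have h5' : (x1-y2)*(y1-z2) - (a₂-a₃) ≠ 0 := fun h => h5 (by rw [e5, h, zero_div])
  have e6 : y1 + (a₁-a₃)/(x1-(y2+(a₂-a₃)/(y1-z2))) - z2
      = ((y1-z2)*((x1-y2)*(y1-z2) - (a₂-a₃)) + (a₁-a₃)*(y1-z2))/((x1-y2)*(y1-z2) - (a₂-a₃)) := by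
    rw [e5]; field_simp; ring
  have h6' : (y1-z2)*((x1-y2)*(y1-z2) - (a₂-a₃)) + (a₁-a₃)*(y1-z2) ≠ 0 :=
    fun h => h6 (by rw [e6, h, zero_div])
  rw [e2, e6, div_div_eq_mul_div, div_div_eq_mul_div]
  rw [div_add_div _ _ h4 h6', div_eq_div_iff h2' (mul_ne_zero h4 h6')]
  ring

set_option maxHeartbeats 1000000 in
private lemma kdv_key1 (a₁ a₂ a₃ x1 y1 y2 z2 : ℂ)
    (h1 : x1 - y2 ≠ 0) (h4 : y1 - z2 ≠ 0)
    (h2 : y1 + (a₁-a₂)/(x1-y2) - z2 ≠ 0)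
    (h3 : x1 - (y2 + (a₁-a₃)/(y1+(a₁-a₂)/(x1-y2)-z2)) ≠ 0)
    (h5 : x1 - (y2 + (a₂-a₃)/(y1-z2)) ≠ 0) :
    (a₁-a₂)/(x1-y2) + (a₂-a₃)/(x1-(y2+(a₁-a₃)/(y1+(a₁-a₂)/(x1-y2)-z2)))
      = (a₁-a₃)/(x1-(y2+(a₂-a₃)/(y1-z2))) := by
  have e2 : y1 + (a₁-a₂)/(x1-y2) - z2 = ((y1-z2)*(x1-y2) + (a₁-a₂))/(x1-y2) := by
    field_simp; ring
  have h2' : (y1-z2)*(x1-y2) + (a₁-a₂) ≠ 0 := fun h => h2 (by rw [e2, h, zero_div])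
  have e3 : x1 - (y2 + (a₁-a₃)/(y1+(a₁-a₂)/(x1-y2)-z2))
      = ((x1-y2)*((y1-z2)*(x1-y2) + (a₁-a₂)) - (a₁-a₃)*(x1-y2))/((y1-z2)*(x1-y2) + (a₁-a₂)) := by
    rw [e2]; field_simp; ring
  have h3' : (x1-y2)*((y1-z2)*(x1-y2) + (a₁-a₂)) - (a₁-a₃)*(x1-y2) ≠ 0 :=
    fun h => h3 (by rw [e3, h, zero_div])
  have e5 : x1 - (y2 + (a₂-a₃)/(y1-z2)) = ((x1-y2)*(y1-z2) - (a₂-a₃))/(y1-z2) := by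
    field_simp; ring
  have h5' : (x1-y2)*(y1-z2) - (a₂-a₃) ≠ 0 := fun h => h5 (by rw [e5, h, zero_div])
  rw [e3, e5, div_div_eq_mul_div, div_div_eq_mul_div]
  rw [div_add_div _ _ h1 h3', div_eq_div_iff (mul_ne_zero h1 h3') h5']
  ring

set_option maxHeartbeats 4000000 in
/-- The lifted discrete potential KdV map satisfies the parametric Yang–Baxter equation
wherever all denominators encountered in both compositions are nonzero. -/
theorem liftKdV_yangBaxter (a₁ a₂ a₃ : ℂ) (u₁ u₂ u₃ : ℂ × ℂ)
    (p1 p2 q1 q2 : (ℂ × ℂ) × (ℂ × ℂ) × (ℂ × ℂ))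
    (hp1 : p1 = act12 (liftKdV a₁ a₂) (u₁, u₂, u₃))
    (hp2 : p2 = act13 (liftKdV a₁ a₃) p1)
    (hq1 : q1 = act23 (liftKdV a₂ a₃) (u₁, u₂, u₃))
    (hq2 : q2 = act13 (liftKdV a₁ a₃) q1)
    (h1 : u₁.1 - u₂.2 ≠ 0)
    (h2 : p1.1.1 - p1.2.2.2 ≠ 0)
    (h3 : p2.2.1.1 - p2.2.2.2 ≠ 0)
    (h4 : u₂.1 - u₃.2 ≠ 0)
    (h5 : q1.1.1 - q1.2.2.2 ≠ 0)
    (h6 : q2.1.1 - q2.2.1.2 ≠ 0) :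
    act23 (liftKdV a₂ a₃) p2 = act12 (liftKdV a₁ a₂) q2 := by
  subst hp1 hp2 hq1 hq2
  obtain ⟨x1, x2⟩ := u₁
  obtain ⟨y1, y2⟩ := u₂
  obtain ⟨z1, z2⟩ := u₃
  simp only [act12, act13, act23, liftKdV, Prod.mk.injEq] at *
  refine ⟨⟨?_, trivial⟩, ⟨?_, ?_⟩, trivial, ?_⟩
  · linear_combination kdv_key2 a₁ a₂ a₃ x1 y1 y2 z2 h1 h4 h2 h5 h6
  · linear_combination kdv_key1 a₁ a₂ a₃ x1 y1 y2 z2 h1 h4 h2 h3 h5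
  · linear_combination kdv_key2 a₁ a₂ a₃ x1 y1 y2 z2 h1 h4 h2 h5 h6
  · linear_combination kdv_key1 a₁ a₂ a₃ x1 y1 y2 z2 h1 h4 h2 h3 h5
end
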